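/- Let 0 < S_m < S* and 0 < I₁ < Î*, and suppose S* − S_m + S* ln(S_m/S*) = Î* − I₁ + Î* ln(I₁/Î*) − (1/β)∫_{Î*}^{I₁}(v̂(i) − v̂(Î*))/i di where v̂ is increasing. Then (S* − S_m)²/S_m ≥ (Î* − I₁)²/(I₁ + Î*), and hence S* − S_m ≥ (Î* − I₁)√(S_m/(I₁ + Î*)). -/

import Mathlib

open intervalIntegral

open Real

-- for 0 < t ≤ 1 : log t ≤ 2*(t-1)/(t+1)
lemma aux_log_le {t : ℝ} (h0 : 0 < t) (h1 : t ≤ 1) :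
    Real.log t ≤ 2*(t-1)/(t+1) := by
  have key : ∀ x ∈ Set.Icc t 1, HasDerivAt (fun x => Real.log x - 2*(x-1)/(x+1))
      (1/x - 4/(x+1)^2) x := by
    intro x hx
    have hx0 : 0 < x := lt_of_lt_of_le h0 hx.1
    have h1x : x + 1 ≠ 0 := by positivity
    have hd1 : HasDerivAt Real.log (1/x) x := by
      simpa [one_div] using Real.hasDerivAt_log hx0.ne'
    have hd2 : HasDerivAt (fun x : ℝ => 2*(x-1)/(x+1)) (4/(x+1)^2) x := by
      have := (((hasDerivAt_id x).sub_const 1).const_mul 2).div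
        ((hasDerivAt_id x).add_const 1) h1x
      have this : HasDerivAt (fun x : ℝ => 2*(x-1)/(x+1))
          ((2*1*(id x+1) - 2*(id x-1)*1)/(id x+1)^2) x := this
      convert this using 1
      simp only [id]
      ring
    exact hd1.sub hd2
  have hmono : MonotoneOn (fun x => Real.log x - 2*(x-1)/(x+1)) (Set.Icc t 1) := by
    apply monotoneOn_of_deriv_nonneg (convex_Icc t 1)
    · exact fun x hx => (key x hx).continuousAt.continuousWithinAt
    · intro x hx
      exact ((key x (interior_subset hx)).differentiableAt).differentiableWithinAt
    · intro x hx
      rw [interior_Icc] at hx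
      rw [(key x ⟨le_of_lt hx.1, le_of_lt hx.2⟩).deriv]
      have hx0 : 0 < x := lt_of_lt_of_le h0 hx.1.le
      rw [sub_nonneg, div_le_div_iff₀ (by positivity) (by positivity)]
      nlinarith [sq_nonneg (x-1)]
  have := hmono ⟨le_refl t, h1⟩ ⟨h1, le_refl 1⟩ h1
  simp [Real.log_one] at this
  linarith

/-- Geometric estimate relating the vertical extent S* − S_m of a Lyapunov level
    line to the horizontal distance Î* − I₁:
    (S* − S_m)²/S_m ≥ (Î* − I₁)²/(I₁ + Î*), hence
    S* − S_m ≥ (Î* − I₁)√(S_m/(I₁ + Î*)). -/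
theorem level_line_estimate_lower
    (β Sstar Sm I₁ Ihat : ℝ)
    (vhat : ℝ → ℝ)
    (hβ : 0 < β)
    (hSm : 0 < Sm) (hSmS : Sm < Sstar)
    (hI₁ : 0 < I₁) (hIord : I₁ < Ihat)
    (hmono : MonotoneOn vhat (Set.Icc I₁ Ihat))
    (heq : Sstar - Sm + Sstar * Real.log (Sm / Sstar)
      = Ihat - I₁ + Ihat * Real.log (I₁ / Ihat)
        - (1/β) * ∫ i in Ihat..I₁, (vhat i - vhat Ihat) / i) :
    (Sstar - Sm)^2 / Sm ≥ (Ihat - I₁)^2 / (I₁ + Ihat) ∧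
    Sstar - Sm ≥ (Ihat - I₁) * Real.sqrt (Sm / (I₁ + Ihat)) := by
  have hSstar : 0 < Sstar := hSm.trans hSmS
  have hIhat : 0 < Ihat := hI₁.trans hIord
  -- integral term is nonneg
  have hJ : (0:ℝ) ≤ ∫ i in Ihat..I₁, (vhat i - vhat Ihat) / i := by
    rw [intervalIntegral.integral_symm]
    rw [le_neg, neg_zero]
    have : (0:ℝ) ≤ ∫ i in I₁..Ihat, -((vhat i - vhat Ihat) / i) := by
      apply intervalIntegral.integral_nonneg hIord.le
      intro u hu
      have hu0 : 0 < u := lt_of_lt_of_le hI₁ hu.1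
      have : vhat u ≤ vhat Ihat :=
        hmono ⟨hu.1, hu.2⟩ ⟨hIord.le, le_refl _⟩ hu.2
      have : (vhat u - vhat Ihat) / u ≤ 0 := div_nonpos_of_nonpos_of_nonneg (by linarith) hu0.le
      linarith
    rw [intervalIntegral.integral_neg] at this
    linarith
  -- lower bound for LHS
  have hlog1 : Real.log (Sm / Sstar) ≥ (Sm - Sstar) / Sm := by
    have h := Real.log_le_sub_one_of_pos (x := Sstar / Sm) (by positivity)
    have : Real.log (Sm / Sstar) = - Real.log (Sstar / Sm) := by
      rw [← Real.log_inv]; congr 1; field_simp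
    rw [this]
    have h2 : Sstar / Sm - 1 = (Sstar - Sm) / Sm := by field_simp
    rw [h2] at h
    have : (Sm - Sstar) / Sm = -((Sstar - Sm) / Sm) := by ring
    rw [this]
    linarith
  have hL : Sstar - Sm + Sstar * Real.log (Sm / Sstar) ≥ -((Sstar - Sm)^2 / Sm) := by
    have : Sstar * ((Sm - Sstar) / Sm) ≤ Sstar * Real.log (Sm / Sstar) :=
      mul_le_mul_of_nonneg_left hlog1 hSstar.le
    have heqq : Sstar - Sm + Sstar * ((Sm - Sstar) / Sm) = -((Sstar - Sm)^2 / Sm) := by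
      field_simp; ring
    linarith
  -- upper bound for RHS log part
  have hlog2 : Real.log (I₁ / Ihat) ≤ 2*(I₁/Ihat - 1)/(I₁/Ihat + 1) :=
    aux_log_le (by positivity) (by rw [div_le_one hIhat]; linarith)
  have hR : Ihat - I₁ + Ihat * Real.log (I₁ / Ihat) ≤ -((Ihat - I₁)^2 / (I₁ + Ihat)) := by
    have h1 : Ihat * Real.log (I₁ / Ihat) ≤ Ihat * (2*(I₁/Ihat - 1)/(I₁/Ihat + 1)) :=
      mul_le_mul_of_nonneg_left hlog2 hIhat.le
    have h2 : Ihat - I₁ + Ihat * (2*(I₁/Ihat - 1)/(I₁/Ihat + 1)) = -((Ihat - I₁)^2 / (I₁ + Ihat)) := by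
      have hIs : (0:ℝ) < I₁ + Ihat := by linarith
      field_simp
      ring
    linarith
  -- combine
  have hmain : (Sstar - Sm)^2 / Sm ≥ (Ihat - I₁)^2 / (I₁ + Ihat) := by
    have hβJ : (1/β) * ∫ i in Ihat..I₁, (vhat i - vhat Ihat) / i ≥ 0 := by positivity
    linarith
  refine ⟨hmain, ?_⟩
  have hIs : (0:ℝ) < I₁ + Ihat := by linarith
  set c := Real.sqrt (Sm / (I₁ + Ihat)) with hc
  have hc0 : 0 ≤ c := Real.sqrt_nonneg _
  have hcsq : c^2 = Sm / (I₁ + Ihat) := Real.sq_sqrt (by positivity)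
  have hbc : ((Ihat - I₁) * c)^2 ≤ (Sstar - Sm)^2 := by
    have h1 : ((Ihat - I₁) * c)^2 = (Ihat - I₁)^2 * (Sm / (I₁ + Ihat)) := by
      rw [mul_pow, hcsq]
    have h2 : (Ihat - I₁)^2 / (I₁ + Ihat) * Sm ≤ (Sstar - Sm)^2 / Sm * Sm :=
      mul_le_mul_of_nonneg_right hmain hSm.le
    rw [div_mul_cancel₀ _ hSm.ne'] at h2
    rw [h1]
    calc (Ihat - I₁)^2 * (Sm / (I₁ + Ihat)) = (Ihat - I₁)^2 / (I₁ + Ihat) * Sm := by ring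
    _ ≤ (Sstar - Sm)^2 := h2
  have ha : 0 ≤ Sstar - Sm := by linarith
  have hbc0 : 0 ≤ (Ihat - I₁) * c := mul_nonneg (by linarith) hc0
  nlinarith [hbc, ha, hbc0]
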